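/- Let T be a labeled rooted tree all of whose node labels satisfy b(t) ≥ 0, and suppose Q(T; β₁) = 0 for some β₁ ≥ 0. Then Q(T; β₂) = 0 for every β₂ with 0 ≤ β₂ ≤ β₁. (Hence the Q-critical value of a node partitions the nonnegative real line into an interval on which Q vanishes and an interval on which Q is negative.) -/
import Mathlib


/-- A finitely-branching rooted tree whose every node carries two real labels
`a` and `b` (representing the incremental informations `ΔI_X` and `ΔI_Y`). -/
inductive LTree : Type where
  | node (a b : ℝ) (k : ℕ) (children : Fin k → LTree) : LTree

/-- The Q-function from Q-tree search:
`Q(T; β) = 0` if the root of `T` has no children, and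
`Q(T; β) = min (a(r) − β·b(r) + Σᵢ Q(Tᵢ; β)) 0` if the root `r` of `T` has
child subtrees `T₁, …, T_k` with `k ≥ 1`. -/
noncomputable def Qfun : LTree → ℝ → ℝ
  | .node a b k c, β =>
      if k = 0 then 0 else min (a - β * b + ∑ i : Fin k, Qfun (c i) β) 0

/-- Every node of the tree satisfies the predicate `p` on its label pair. -/
def ForallNodes (p : ℝ → ℝ → Prop) : LTree → Prop
  | .node a b k c => p a b ∧ ∀ i : Fin k, ForallNodes p (c i)

/-- `IsPruning P T` : `P` is a pruning of `T`.  The single-node tree carrying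
the root labels of `T` is a pruning of `T`; and if `T` has root `r` with child
subtrees `T₁, …, T_k` (`k ≥ 1`) and `Pᵢ` is a pruning of `Tᵢ` for each `i`,
then the tree with root `r` and child subtrees `P₁, …, P_k` is a pruning of `T`. -/
inductive IsPruning : LTree → LTree → Prop where
  | root (a b : ℝ) (k : ℕ) (c : Fin k → LTree) (f0 : Fin 0 → LTree) :
      IsPruning (.node a b 0 f0) (.node a b k c)
  | step (a b : ℝ) (k : ℕ) (hk : 0 < k) (c P : Fin k → LTree)
      (h : ∀ i, IsPruning (P i) (c i)) :
      IsPruning (.node a b k P) (.node a b k c)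

/-- `c_β(P)` : the sum of `a(s) − β·b(s)` over the interior nodes `s` of `P`
(nodes with at least one child). -/
noncomputable def cost (β : ℝ) : LTree → ℝ
  | .node a b k c =>
      if k = 0 then 0 else (a - β * b) + ∑ i : Fin k, cost β (c i)

theorem Qfun_nonpos (T : LTree) (β : ℝ) : Qfun T β ≤ 0 := by
  induction T with
  | node a b k c ih =>
    rw [Qfun]
    split
    · exact le_refl 0
    · exact min_le_right _ _

theorem Qfun_anti (T : LTree) (hb : ForallNodes (fun _ b => 0 ≤ b) T)
    {β₁ β₂ : ℝ} (h : β₂ ≤ β₁) : Qfun T β₁ ≤ Qfun T β₂ := by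
  induction T with
  | node a b k c ih =>
    obtain ⟨hb0, hbc⟩ := hb
    rw [Qfun, Qfun]
    split
    · exact le_refl 0
    · refine min_le_min (add_le_add (sub_le_sub le_rfl (mul_le_mul_of_nonneg_right h hb0))
        (Finset.sum_le_sum fun i _ => ih i (hbc i))) le_rfl

/-- If all node labels of `T` satisfy `b(t) ≥ 0` and `Q(T; β₁) = 0` for some
`β₁ ≥ 0`, then `Q(T; β₂) = 0` for every `0 ≤ β₂ ≤ β₁`. -/
theorem Qfun_eq_zero_of_le (T : LTree)
    (hb : ForallNodes (fun _ b => 0 ≤ b) T)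
    (β₁ : ℝ) (hβ₁ : 0 ≤ β₁) (hQ : Qfun T β₁ = 0) :
    ∀ β₂ : ℝ, 0 ≤ β₂ → β₂ ≤ β₁ → Qfun T β₂ = 0 := by
  intro β₂ _ h
  exact le_antisymm (Qfun_nonpos T β₂) (hQ ▸ Qfun_anti T hb h)
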